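/- Let X be an A–B imprimitivity bimodule and let π : B → B(H) be a representation of B on a Hilbert space H. Then for each x ∈ X, tr(π(⟨x,x⟩_B)) = tr((X-Ind π)(⟨x,x⟩_A)) as elements of [0,∞]. -/
import Mathlib


noncomputable section

open scoped ComplexInnerProductSpace ENNReal

/-- A bundled complex Hilbert space. -/
structure HilbertBundle : Type 1 where
  carrier : Type
  [nacg : NormedAddCommGroup carrier]
  [ips : InnerProductSpace ℂ carrier]
  [cs : CompleteSpace carrier]

attribute [instance] HilbertBundle.nacg HilbertBundle.ips HilbertBundle.cs

/-- A representation of a (possibly non-unital) C⋆-algebra on a Hilbert space, i.e. a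
⋆-homomorphism into the bounded operators. -/
structure CStarRep (B : Type) [NonUnitalCStarAlgebra B] : Type 1 where
  space : HilbertBundle
  π : B →⋆ₙₐ[ℂ] (space.carrier →L[ℂ] space.carrier)

/-- An `A`–`B` imprimitivity bimodule: a complex vector space `X` which is a full left Hilbert
`A`-module and a full right Hilbert `B`-module, with commuting actions, satisfying
`⟨x,y⟩_A ⬝ z = x ⬝ ⟨y,z⟩_B`.  The `A`-valued inner product is linear in the first variable and
the `B`-valued one in the second.  `X` is complete for the norm `‖x‖ = ‖⟨x,x⟩_B‖^{1/2}`
(which coincides with `‖⟨x,x⟩_A‖^{1/2}`). -/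
structure ImprimitivityBimodule (A B : Type) [NonUnitalCStarAlgebra A]
    [NonUnitalCStarAlgebra B] : Type 1 where
  X : Type
  [nacg : NormedAddCommGroup X]
  [nsp : NormedSpace ℂ X]
  [cs : CompleteSpace X]
  smulA : A → X → X
  smulB : X → B → X
  innA : X → X → A
  innB : X → X → B
  -- `X` is a left `A`-module
  smulA_add : ∀ a x y, smulA a (x + y) = smulA a x + smulA a y
  add_smulA : ∀ a a' x, smulA (a + a') x = smulA a x + smulA a' x
  mul_smulA : ∀ a a' x, smulA (a * a') x = smulA a (smulA a' x)
  smulA_smul : ∀ (c : ℂ) a x, smulA (c • a) x = c • smulA a x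
  smulA_smul' : ∀ (c : ℂ) a x, smulA a (c • x) = c • smulA a x
  -- `X` is a right `B`-module
  smulB_add : ∀ x y b, smulB (x + y) b = smulB x b + smulB y b
  smulB_add' : ∀ x b b', smulB x (b + b') = smulB x b + smulB x b'
  smulB_mul : ∀ x b b', smulB x (b * b') = smulB (smulB x b) b'
  smulB_smul : ∀ (c : ℂ) x b, smulB x (c • b) = c • smulB x b
  smulB_smul' : ∀ (c : ℂ) x b, smulB (c • x) b = c • smulB x b
  -- the two actions commute
  smul_commutes : ∀ a x b, smulB (smulA a x) b = smulA a (smulB x b)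
  -- the `A`-valued inner product (linear in the first variable)
  innA_add : ∀ x y z, innA (x + y) z = innA x z + innA y z
  innA_add' : ∀ x y z, innA x (y + z) = innA x y + innA x z
  innA_smul : ∀ (c : ℂ) x y, innA (c • x) y = c • innA x y
  innA_star : ∀ x y, star (innA x y) = innA y x
  innA_smulA : ∀ a x y, innA (smulA a x) y = a * innA x y
  innA_pos : ∀ x, ∃ a, innA x x = star a * a
  innA_definite : ∀ x, innA x x = 0 → x = 0
  -- the `B`-valued inner product (linear in the second variable)
  innB_add : ∀ x y z, innB (x + y) z = innB x z + innB y z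
  innB_add' : ∀ x y z, innB x (y + z) = innB x y + innB x z
  innB_smul : ∀ (c : ℂ) x y, innB x (c • y) = c • innB x y
  innB_star : ∀ x y, star (innB x y) = innB y x
  innB_smulB : ∀ x y b, innB x (smulB y b) = innB x y * b
  innB_pos : ∀ x, ∃ b, innB x x = star b * b
  innB_definite : ∀ x, innB x x = 0 → x = 0
  -- the norm on `X` is the Hilbert-module norm for both inner products
  norm_innA : ∀ x, ‖x‖ ^ 2 = ‖innA x x‖
  norm_innB : ∀ x, ‖x‖ ^ 2 = ‖innB x x‖
  -- fullness of both inner products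
  full_innA : closure (Submodule.span ℂ {a : A | ∃ x y, a = innA x y} : Set A) = Set.univ
  full_innB : closure (Submodule.span ℂ {b : B | ∃ x y, b = innB x y} : Set B) = Set.univ
  -- the imprimitivity condition `⟨x,y⟩_A ⬝ z = x ⬝ ⟨y,z⟩_B`
  imprimitivity : ∀ x y z, smulA (innA x y) z = smulB x (innB y z)

attribute [instance] ImprimitivityBimodule.nacg ImprimitivityBimodule.nsp
  ImprimitivityBimodule.cs
/-- A realization of the induced representation `X-Ind π` of `A` on `X ⊗_B H`, given an
`A`–`B` imprimitivity bimodule `X` and a representation `π` of `B` on `H`.  The map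
`t x h = x ⊗ h` is bilinear, `B`-balanced, has dense range span, satisfies the pre-inner
product identity `(x ⊗ h | y ⊗ k) = (π(⟨y,x⟩_B) h | k)` (written below in Mathlib's
convention, where the inner product is conjugate-linear in the first variable), and
intertwines the `A`-actions: `(X-Ind π)(a)(x ⊗ h) = (a⬝x) ⊗ h`. -/
structure InducedRepWitness {A B : Type} [NonUnitalCStarAlgebra A] [NonUnitalCStarAlgebra B]
    (E : ImprimitivityBimodule A B) (ρ : CStarRep B) (ρ' : CStarRep A) : Type 1 where
  t : E.X → ρ.space.carrier → ρ'.space.carrier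
  t_add_left : ∀ x y h, t (x + y) h = t x h + t y h
  t_add_right : ∀ x h k, t x (h + k) = t x h + t x k
  t_smul_left : ∀ (c : ℂ) x h, t (c • x) h = c • t x h
  t_smul_right : ∀ (c : ℂ) x h, t x (c • h) = c • t x h
  t_balanced : ∀ x b h, t (E.smulB x b) h = t x (ρ.π b h)
  t_inner : ∀ x y h k, ⟪t y k, t x h⟫ = ⟪k, ρ.π (E.innB y x) h⟫
  t_dense : closure (Submodule.span ℂ {v : ρ'.space.carrier | ∃ x h, v = t x h} :
      Set ρ'.space.carrier) = Set.univ
  t_intertwine : ∀ a x h, ρ'.π a (t x h) = t (E.smulA a x) h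
/-- Let `X` be an `A`–`B` imprimitivity bimodule and `π : B → B(H)` a
representation of `B`.  Then for each `x ∈ X`,
`tr(π(⟨x,x⟩_B)) = tr((X-Ind π)(⟨x,x⟩_A))` as elements of `[0,∞]`, the traces being computed
with respect to any orthonormal bases of `H` and of `X ⊗_B H`. -/
private lemma parseval_ennreal {ι F : Type} [NormedAddCommGroup F] [InnerProductSpace ℂ F]
    (b : HilbertBasis ι ℂ F) (v : F) :
    ∑' i, ENNReal.ofReal (‖⟪b i, v⟫‖ ^ 2) = ENNReal.ofReal (‖v‖ ^ 2) := by
  have h0 := b.hasSum_inner_mul_inner v v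
  have h1 : HasSum (fun i => ‖(⟪b i, v⟫ : ℂ)‖ ^ 2) (‖v‖ ^ 2) := by
    have h2 := h0.mapL Complex.reCLM
    have e1 : ∀ i : ι, Complex.reCLM ((⟪v, b i⟫ : ℂ) * ⟪b i, v⟫) = ‖(⟪b i, v⟫ : ℂ)‖ ^ 2 := by
      intro i
      have hz : (⟪b i, v⟫ : ℂ) = starRingEnd ℂ ⟪v, b i⟫ := (inner_conj_symm _ _).symm
      rw [hz, RCLike.mul_conj, RCLike.norm_conj]
      simp [← Complex.ofReal_pow]
    have e2 : Complex.reCLM (⟪v, v⟫ : ℂ) = ‖v‖ ^ 2 := by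
      have := inner_self_eq_norm_sq (𝕜 := ℂ) v
      simpa using this
    exact e2 ▸ h2.congr_fun (fun i => (e1 i).symm)
  rw [← h1.tsum_eq, ← ENNReal.ofReal_tsum_of_nonneg (fun i => by positivity) h1.summable]


theorem trace_inducedRep_inner_eq {A B : Type}
    [NonUnitalCStarAlgebra A] [NonUnitalCStarAlgebra B]
    (E : ImprimitivityBimodule A B) (ρ : CStarRep B) (ρ' : CStarRep A)
    (W : InducedRepWitness E ρ ρ') (x : E.X)
    {ιB ιA : Type} (b : HilbertBasis ιB ℂ ρ.space.carrier)
    (b' : HilbertBasis ιA ℂ ρ'.space.carrier) :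
    ∑' i, ENNReal.ofReal (⟪b i, ρ.π (E.innB x x) (b i)⟫).re =
      ∑' j, ENNReal.ofReal (⟪b' j, ρ'.π (E.innA x x) (b' j)⟫).re := by
  classical
  -- the bounded operator T : H → H', h ↦ x ⊗ h
  have hb : ∀ h : ρ.space.carrier, ‖W.t x h‖ ≤ Real.sqrt ‖ρ.π (E.innB x x)‖ * ‖h‖ := by
    intro h
    have h1 : (⟪W.t x h, W.t x h⟫ : ℂ) = ⟪h, ρ.π (E.innB x x) h⟫ := W.t_inner x x h h
    have h2 : ‖W.t x h‖ ^ 2 = RCLike.re (⟪h, ρ.π (E.innB x x) h⟫ : ℂ) := by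
      rw [← h1, inner_self_eq_norm_sq]
    have h3 : ‖W.t x h‖ ^ 2 ≤ ‖ρ.π (E.innB x x)‖ * ‖h‖ ^ 2 := by
      rw [h2]
      calc RCLike.re (⟪h, ρ.π (E.innB x x) h⟫ : ℂ) ≤ ‖(⟪h, ρ.π (E.innB x x) h⟫ : ℂ)‖ := RCLike.re_le_norm _
        _ ≤ ‖h‖ * ‖ρ.π (E.innB x x) h‖ := norm_inner_le_norm _ _
        _ ≤ ‖h‖ * (‖ρ.π (E.innB x x)‖ * ‖h‖) := by
            gcongr
            exact (ρ.π (E.innB x x)).le_opNorm h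
        _ = ‖ρ.π (E.innB x x)‖ * ‖h‖ ^ 2 := by ring
    have h4 : ‖W.t x h‖ = Real.sqrt (‖W.t x h‖ ^ 2) := (Real.sqrt_sq (norm_nonneg _)).symm
    rw [h4]
    calc Real.sqrt (‖W.t x h‖ ^ 2) ≤ Real.sqrt (‖ρ.π (E.innB x x)‖ * ‖h‖ ^ 2) := Real.sqrt_le_sqrt h3
      _ = Real.sqrt ‖ρ.π (E.innB x x)‖ * ‖h‖ := by
          rw [Real.sqrt_mul (norm_nonneg _), Real.sqrt_sq (norm_nonneg _)]
  set Tl : ρ.space.carrier →ₗ[ℂ] ρ'.space.carrier :=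
    { toFun := W.t x
      map_add' := W.t_add_right x
      map_smul' := fun c h => W.t_smul_right c x h } with hTl
  set T : ρ.space.carrier →L[ℂ] ρ'.space.carrier :=
    Tl.mkContinuous (Real.sqrt ‖ρ.π (E.innB x x)‖) hb with hT
  have hTapp : ∀ h, T h = W.t x h := fun _ => rfl
  set T' := ContinuousLinearMap.adjoint T with hT'
  -- the adjoint on elementary tensors
  have hadj : ∀ (y : E.X) (k : ρ.space.carrier), T' (W.t y k) = ρ.π (E.innB x y) k := by
    intro y k
    apply ext_inner_left ℂ
    intro h
    rw [hT', ContinuousLinearMap.adjoint_inner_right]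
    calc (⟪T h, W.t y k⟫ : ℂ)
        = starRingEnd ℂ ⟪W.t y k, T h⟫ := (inner_conj_symm _ _).symm
      _ = starRingEnd ℂ ⟪k, ρ.π (E.innB y x) h⟫ := by rw [hTapp, W.t_inner x y h k]
      _ = ⟪ρ.π (E.innB y x) h, k⟫ := inner_conj_symm _ _
      _ = ⟪h, ContinuousLinearMap.adjoint (ρ.π (E.innB y x)) k⟫ :=
          (ContinuousLinearMap.adjoint_inner_right _ _ _).symm
      _ = ⟪h, ρ.π (E.innB x y) k⟫ := by
          rw [← ContinuousLinearMap.star_eq_adjoint, ← map_star, E.innB_star]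
  -- the induced representation of ⟨x,x⟩_A equals T ∘ T'
  have hS : ∀ v, ρ'.π (E.innA x x) v = T (T' v) := by
    have hgen : ∀ (y : E.X) (k : ρ.space.carrier),
        ρ'.π (E.innA x x) (W.t y k) = T (T' (W.t y k)) := by
      intro y k
      rw [hadj, hTapp, ← W.t_balanced, ← E.imprimitivity, ← W.t_intertwine]
    intro v
    set f : ρ'.space.carrier →L[ℂ] ρ'.space.carrier :=
      ρ'.π (E.innA x x) - T ∘L T' with hf
    have hker : (Submodule.span ℂ {v : ρ'.space.carrier | ∃ y k, v = W.t y k} : Set _) ⊆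
        {v | f v = 0} := by
      have : {v : ρ'.space.carrier | ∃ y k, v = W.t y k} ⊆
          (LinearMap.ker (f : ρ'.space.carrier →ₗ[ℂ] ρ'.space.carrier) : Set _) := by
        rintro v ⟨y, k, rfl⟩
        simp only [SetLike.mem_coe, LinearMap.mem_ker]
        show f (W.t y k) = 0
        rw [hf]
        simp only [ContinuousLinearMap.sub_apply, ContinuousLinearMap.comp_apply]
        rw [hgen y k, sub_self]
      intro v hv
      have := Submodule.span_le.mpr this hv
      simpa using this
    have hclosed : IsClosed {v : ρ'.space.carrier | f v = 0} :=
      isClosed_eq f.continuous continuous_const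
    have hsub := closure_minimal hker hclosed
    rw [W.t_dense] at hsub
    have hv0 : f v = 0 := hsub (Set.mem_univ v)
    have : ρ'.π (E.innA x x) v - T (T' v) = 0 := by
      simpa [hf, ContinuousLinearMap.sub_apply] using hv0
    exact sub_eq_zero.mp this
  -- diagonal matrix entries
  have hdiagB : ∀ i, (⟪b i, ρ.π (E.innB x x) (b i)⟫ : ℂ).re = ‖T (b i)‖ ^ 2 := by
    intro i
    have h1 : (⟪W.t x (b i), W.t x (b i)⟫ : ℂ) = ⟪b i, ρ.π (E.innB x x) (b i)⟫ :=
      W.t_inner x x (b i) (b i)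
    have h2 := inner_self_eq_norm_sq (𝕜 := ℂ) (W.t x (b i))
    rw [hTapp (b i), ← h1]
    simpa using h2
  have hdiagA : ∀ j, (⟪b' j, ρ'.π (E.innA x x) (b' j)⟫ : ℂ).re = ‖T' (b' j)‖ ^ 2 := by
    intro j
    rw [hS]
    have h1 : (⟪T' (b' j), T' (b' j)⟫ : ℂ) = ⟪b' j, T (T' (b' j))⟫ := by
      rw [hT']
      exact ContinuousLinearMap.adjoint_inner_left T _ _
    have h2 := inner_self_eq_norm_sq (𝕜 := ℂ) (T' (b' j))
    rw [← h1]
    simpa using h2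
  calc ∑' i, ENNReal.ofReal (⟪b i, ρ.π (E.innB x x) (b i)⟫ : ℂ).re
      = ∑' i, ENNReal.ofReal (‖T (b i)‖ ^ 2) := by
        exact tsum_congr fun i => by rw [hdiagB i]
    _ = ∑' i, ∑' j, ENNReal.ofReal (‖(⟪b' j, T (b i)⟫ : ℂ)‖ ^ 2) := by
        exact tsum_congr fun i => (parseval_ennreal b' (T (b i))).symm
    _ = ∑' j, ∑' i, ENNReal.ofReal (‖(⟪b' j, T (b i)⟫ : ℂ)‖ ^ 2) := ENNReal.tsum_comm
    _ = ∑' j, ∑' i, ENNReal.ofReal (‖(⟪b i, T' (b' j)⟫ : ℂ)‖ ^ 2) := by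
        refine tsum_congr fun j => tsum_congr fun i => ?_
        congr 2
        calc ‖(⟪b' j, T (b i)⟫ : ℂ)‖ = ‖(⟪T' (b' j), b i⟫ : ℂ)‖ := by
              rw [hT', ContinuousLinearMap.adjoint_inner_left]
          _ = ‖(⟪b i, T' (b' j)⟫ : ℂ)‖ := by
              rw [← inner_conj_symm (𝕜 := ℂ) (b i) (T' (b' j))]
              exact (RCLike.norm_conj ((⟪T' (b' j), b i⟫ : ℂ))).symm
    _ = ∑' j, ENNReal.ofReal (‖T' (b' j)‖ ^ 2) := by
        exact tsum_congr fun j => parseval_ennreal b (T' (b' j))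
    _ = ∑' j, ENNReal.ofReal (⟪b' j, ρ'.π (E.innA x x) (b' j)⟫ : ℂ).re := by
        exact tsum_congr fun j => by rw [hdiagA j]
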